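/- For all natural numbers i, j, k, m, the Fourier coefficient C_{ijkm} equals the number of pairs of natural numbers (s, t) with s ≤ min(i, j), t ≤ min(k, m) and |i − j| + 2s = |k − m| + 2t; that is, C_{ijkm} = Card{(s, t) ∈ ℕ × ℕ : s ≤ min(i, j), t ≤ min(k, m), |i − j| + 2s = |k − m| + 2t} (the cardinality cast to a real number). -/

import Mathlib

open MeasureTheory

/-- Chebyshev polynomials of the second kind, as real-valued functions. -/
noncomputable def chebU : ℕ → ℝ → ℝ
  | 0, _ => 1
  | 1, y => 2 * y
  | n + 2, y => 2 * y * chebU (n + 1) y - chebU n y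

/-- Fourier coefficients of the cubic conformal wave equation on the Einstein cylinder
in spherical symmetry. -/
noncomputable def Ccoef (i j k m : ℕ) : ℝ :=
  (2 / Real.pi) *
    ∫ y in (-1:ℝ)..1, chebU i y * chebU j y * chebU k y * chebU m y * Real.sqrt (1 - y ^ 2)

lemma chebU_continuous (n : ℕ) : Continuous (chebU n) := by
  induction n using Nat.twoStepInduction with
  | zero => simpa [chebU] using continuous_const
  | one => show Continuous (fun y : ℝ => 2 * y); fun_prop
  | more n h1 h2 =>
    show Continuous (fun y : ℝ => 2 * y * chebU (n + 1) y - chebU n y)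
    exact ((continuous_const.mul continuous_id).mul h2).sub h1

lemma chebU_cos (n : ℕ) (θ : ℝ) :
    chebU n (Real.cos θ) * Real.sin θ = Real.sin ((n + 1) * θ) := by
  induction n using Nat.twoStepInduction with
  | zero => simp [chebU]
  | one =>
    show 2 * Real.cos θ * Real.sin θ = _
    push_cast
    rw [show ((1:ℝ) + 1) * θ = θ + θ by ring, Real.sin_add]
    ring
  | more n h1 h2 =>
    show (2 * Real.cos θ * chebU (n + 1) (Real.cos θ) - chebU n (Real.cos θ)) * Real.sin θ = _
    push_cast at h1 h2 ⊢
    have key : Real.sin (((n:ℝ) + 2 + 1) * θ) + Real.sin (((n:ℝ) + 1) * θ)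
        = 2 * Real.cos θ * Real.sin (((n:ℝ) + 1 + 1) * θ) := by
      have e1 : ((n:ℝ) + 2 + 1) * θ = ((n:ℝ) + 1 + 1) * θ + θ := by ring
      have e2 : ((n:ℝ) + 1) * θ = ((n:ℝ) + 1 + 1) * θ - θ := by ring
      rw [e1, e2, Real.sin_add, Real.sin_sub]; ring
    calc (2 * Real.cos θ * chebU (n + 1) (Real.cos θ) - chebU n (Real.cos θ)) * Real.sin θ
        = 2 * Real.cos θ * (chebU (n + 1) (Real.cos θ) * Real.sin θ)
          - chebU n (Real.cos θ) * Real.sin θ := by ring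
      _ = 2 * Real.cos θ * Real.sin (((n:ℝ) + 1 + 1) * θ) - Real.sin (((n:ℝ) + 1) * θ) := by
          rw [h1, h2]
      _ = Real.sin (((n:ℝ) + 2 + 1) * θ) := by linarith [key]

lemma chebU_mul_add (i : ℕ) : ∀ d : ℕ, ∀ y : ℝ,
    chebU i y * chebU (i + d) y = ∑ s ∈ Finset.range (i + 1), chebU (d + 2 * s) y := by
  induction i using Nat.twoStepInduction with
  | zero => intro d y; simp [chebU]
  | one =>
    intro d y
    have rec' : chebU (d + 2) y = 2 * y * chebU (d + 1) y - chebU d y := rfl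
    have : chebU 1 y = 2 * y := rfl
    rw [Finset.sum_range_succ, Finset.sum_range_one]
    simp only [Nat.mul_zero, Nat.add_zero, Nat.mul_one]
    rw [show 1 + d = d + 1 by ring, this, rec']; ring
  | more i h1 h2 =>
    intro d y
    have rec' : chebU (i + 2) y = 2 * y * chebU (i + 1) y - chebU i y := rfl
    have key : ∀ n : ℕ, 2 * y * chebU (n + 1) y = chebU (n + 2) y + chebU n y := by
      intro n
      have : chebU (n + 2) y = 2 * y * chebU (n + 1) y - chebU n y := rfl
      rw [this]; ring
    have e2 := h2 (d + 1) y
    have e1 := h1 (d + 2) y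
    rw [show i + 2 + d = i + 1 + (d + 1) by ring] at *
    rw [rec']
    have expand : (2 * y * chebU (i + 1) y - chebU i y) * chebU (i + 1 + (d + 1)) y
        = 2 * y * (chebU (i + 1) y * chebU (i + 1 + (d + 1)) y)
          - chebU i y * chebU (i + (d + 2)) y := by
      rw [show i + (d + 2) = i + 1 + (d + 1) by ring]; ring
    rw [expand, e2, Finset.mul_sum, e1]
    have step : ∀ s ∈ Finset.range (i + 2), 2 * y * chebU (d + 1 + 2 * s) y
        = chebU (d + 2 * s) y + chebU (d + 2 + 2 * s) y := by
      intro s _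
      have := key (d + 2 * s)
      rw [show d + 1 + 2 * s = d + 2 * s + 1 by ring, this,
        show d + 2 * s + 2 = d + 2 + 2 * s by ring]; ring
    rw [Finset.sum_congr rfl step, Finset.sum_add_distrib]
    have last : ∑ s ∈ Finset.range (i + 2), chebU (d + 2 + 2 * s) y
        - ∑ s ∈ Finset.range (i + 1), chebU (d + 2 + 2 * s) y
        = chebU (d + 2 + 2 * (i + 1)) y := by
      rw [Finset.sum_range_succ]; ring
    have goal : ∑ s ∈ Finset.range (i + 2 + 1), chebU (d + 2 * s) y
        = ∑ s ∈ Finset.range (i + 2), chebU (d + 2 * s) y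
          + chebU (d + 2 + 2 * (i + 1)) y := by
      rw [Finset.sum_range_succ, show d + 2 * (i + 2) = d + 2 + 2 * (i + 1) by ring]
    rw [goal]; linarith [last]

lemma chebU_mul (i j : ℕ) (y : ℝ) :
    chebU i y * chebU j y
      = ∑ s ∈ Finset.range (min i j + 1), chebU ((max i j - min i j) + 2 * s) y := by
  rcases le_total i j with h | h
  · rw [min_eq_left h, max_eq_right h, ← chebU_mul_add i (j - i) y,
      Nat.add_sub_cancel' h]
  · rw [min_eq_right h, max_eq_left h, mul_comm, ← chebU_mul_add j (i - j) y,
      Nat.add_sub_cancel' h]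

lemma integral_cos_mul_const (c : ℝ) (hc : c ≠ 0) :
    ∫ x in (0:ℝ)..Real.pi, Real.cos (c * x) = Real.sin (c * Real.pi) / c := by
  rw [intervalIntegral.integral_comp_mul_left Real.cos hc]
  simp [integral_cos, div_eq_inv_mul]

lemma integral_sin_nat_mul_sin (n q : ℕ) (hn : n ≠ 0) (hq : q ≠ 0) :
    ∫ x in (0:ℝ)..Real.pi, Real.sin (n * x) * Real.sin (q * x)
      = if n = q then Real.pi / 2 else 0 := by
  have hrw : ∀ x : ℝ, Real.sin (n * x) * Real.sin (q * x)
      = (1:ℝ)/2 * (Real.cos (((n:ℝ) - q) * x) - Real.cos (((n:ℝ) + q) * x)) := by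
    intro x
    rw [show ((n:ℝ) - q) * x = n * x - q * x by ring,
      show ((n:ℝ) + q) * x = n * x + q * x by ring, Real.cos_sub, Real.cos_add]
    ring
  simp only [hrw]
  have hi1 : IntervalIntegrable (fun x => Real.cos (((n:ℝ) - q) * x)) volume 0 Real.pi :=
    (Real.continuous_cos.comp (continuous_const.mul continuous_id)).intervalIntegrable _ _
  have hi2 : IntervalIntegrable (fun x => Real.cos (((n:ℝ) + q) * x)) volume 0 Real.pi :=
    (Real.continuous_cos.comp (continuous_const.mul continuous_id)).intervalIntegrable _ _
  rw [_root_.intervalIntegral.integral_const_mul, _root_.intervalIntegral.integral_sub hi1 hi2]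
  have hsum : ((n:ℝ) + q) ≠ 0 := by positivity
  have int2 : ∫ x in (0:ℝ)..Real.pi, Real.cos (((n:ℝ) + q) * x) = 0 := by
    rw [integral_cos_mul_const _ hsum]
    have : ((n:ℝ) + q) * Real.pi = ((n + q : ℕ) : ℝ) * Real.pi := by push_cast; ring
    rw [this, Real.sin_nat_mul_pi, zero_div]
  rw [int2]
  by_cases h : n = q
  · subst h
    simp only [sub_self, zero_mul, Real.cos_zero, if_pos rfl]
    rw [intervalIntegral.integral_const]
    simp
    ring
  · rw [if_neg h]
    have hd : ((n:ℝ) - q) ≠ 0 := by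
      intro hcon
      exact h (by exact_mod_cast sub_eq_zero.mp hcon)
    rw [integral_cos_mul_const _ hd]
    have : ((n:ℝ) - q) * Real.pi = (((n:ℤ) - q : ℤ) : ℝ) * Real.pi := by push_cast; ring
    rw [this, Real.sin_int_mul_pi]
    simp

lemma cheb_orth (a b : ℕ) :
    ∫ y in (-1:ℝ)..1, chebU a y * chebU b y * Real.sqrt (1 - y ^ 2)
      = if a = b then Real.pi / 2 else 0 := by
  have hg : Continuous (fun y : ℝ => chebU a y * chebU b y * Real.sqrt (1 - y ^ 2)) :=
    ((chebU_continuous a).mul (chebU_continuous b)).mul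
      (Real.continuous_sqrt.comp (by fun_prop))
  have hderiv : ∀ x ∈ Set.uIcc (0:ℝ) Real.pi,
      HasDerivAt Real.cos (-Real.sin x) x := fun x _ => Real.hasDerivAt_cos x
  have subst := intervalIntegral.integral_comp_smul_deriv hderiv
    (Real.continuous_sin.neg.continuousOn) hg
  rw [Real.cos_zero, Real.cos_pi] at subst
  have flip : ∫ y in (1:ℝ)..(-1), chebU a y * chebU b y * Real.sqrt (1 - y ^ 2)
      = -∫ y in (-1:ℝ)..1, chebU a y * chebU b y * Real.sqrt (1 - y ^ 2) :=
    intervalIntegral.integral_symm _ _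
  have congr_int : ∫ x in (0:ℝ)..Real.pi,
      (-Real.sin x) • ((fun y : ℝ => chebU a y * chebU b y * Real.sqrt (1 - y ^ 2))
        ∘ Real.cos) x
      = -∫ x in (0:ℝ)..Real.pi,
          Real.sin (((a:ℝ)+1) * x) * Real.sin (((b:ℝ)+1) * x) := by
    rw [← intervalIntegral.integral_neg]
    apply intervalIntegral.integral_congr
    intro x hx
    rw [Set.uIcc_of_le Real.pi_pos.le] at hx
    have hsin : Real.sqrt (1 - Real.cos x ^ 2) = Real.sin x := by
      rw [show 1 - Real.cos x ^ 2 = Real.sin x ^ 2 by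
        have := Real.sin_sq_add_cos_sq x; linarith]
      exact Real.sqrt_sq (Real.sin_nonneg_of_nonneg_of_le_pi hx.1 hx.2)
    simp only [Function.comp_apply, smul_eq_mul, hsin]
    have ha := chebU_cos a x
    have hb := chebU_cos b x
    push_cast at ha hb
    rw [show (-Real.sin x) * (chebU a (Real.cos x) * chebU b (Real.cos x) * Real.sin x)
        = -((chebU a (Real.cos x) * Real.sin x) * (chebU b (Real.cos x) * Real.sin x)) by
        ring, ha, hb]
  rw [congr_int, flip] at subst
  have heq : ∫ y in (-1:ℝ)..1, chebU a y * chebU b y * Real.sqrt (1 - y ^ 2)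
      = ∫ x in (0:ℝ)..Real.pi, Real.sin (((a:ℝ)+1) * x) * Real.sin (((b:ℝ)+1) * x) := by
    linarith [subst]
  have key := integral_sin_nat_mul_sin (a + 1) (b + 1) (Nat.succ_ne_zero a) (Nat.succ_ne_zero b)
  push_cast at key
  rw [heq]
  rw [key]

lemma abs_cast_max_min (i j : ℕ) : ((max i j - min i j : ℕ) : ℤ) = |(i:ℤ) - (j:ℤ)| := by
  rcases le_total i j with h | h
  · rw [max_eq_right h, min_eq_left h, abs_sub_comm,
      abs_of_nonneg (sub_nonneg.mpr (by exact_mod_cast h))]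
    omega
  · rw [max_eq_left h, min_eq_right h,
      abs_of_nonneg (sub_nonneg.mpr (by exact_mod_cast h))]
    omega

/-- Closed counting formula for the Fourier coefficients: `C_{ijkm}` equals the number of
pairs `(s, t)` with `s ≤ min i j`, `t ≤ min k m` and `|i − j| + 2s = |k − m| + 2t`. -/
theorem Ccoef_eq_card (i j k m : ℕ) :
    Ccoef i j k m =
      (((Finset.range (min i j + 1) ×ˢ Finset.range (min k m + 1)).filter
        (fun p => |(i:ℤ) - (j:ℤ)| + 2 * (p.1:ℤ) = |(k:ℤ) - (m:ℤ)| + 2 * (p.2:ℤ))).card : ℝ) := by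
  set a := max i j - min i j with ha
  set b := max k m - min k m with hb
  have expand : ∀ y : ℝ, chebU i y * chebU j y * chebU k y * chebU m y * Real.sqrt (1 - y ^ 2)
      = ∑ p ∈ Finset.range (min i j + 1) ×ˢ Finset.range (min k m + 1),
          chebU (a + 2 * p.1) y * chebU (b + 2 * p.2) y * Real.sqrt (1 - y ^ 2) := by
    intro y
    have e : chebU i y * chebU j y * chebU k y * chebU m y
        = (chebU i y * chebU j y) * (chebU k y * chebU m y) := by ring
    rw [e, chebU_mul i j y, chebU_mul k m y, Finset.sum_mul_sum, ← ha, ← hb,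
      Finset.sum_mul, Finset.sum_product]
    exact Finset.sum_congr rfl fun s _ => by rw [Finset.sum_mul]
  have integrable : ∀ p ∈ Finset.range (min i j + 1) ×ˢ Finset.range (min k m + 1),
      IntervalIntegrable
        (fun y => chebU (a + 2 * p.1) y * chebU (b + 2 * p.2) y * Real.sqrt (1 - y ^ 2))
        volume (-1:ℝ) 1 := by
    intro p _
    exact (((chebU_continuous _).mul (chebU_continuous _)).mul
      (Real.continuous_sqrt.comp (by fun_prop))).intervalIntegrable _ _
  rw [Ccoef]
  simp only [expand]
  rw [intervalIntegral.integral_finset_sum integrable]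
  have orth : ∀ p ∈ Finset.range (min i j + 1) ×ˢ Finset.range (min k m + 1),
      (∫ y in (-1:ℝ)..1,
        chebU (a + 2 * p.1) y * chebU (b + 2 * p.2) y * Real.sqrt (1 - y ^ 2))
      = if |(i:ℤ) - (j:ℤ)| + 2 * (p.1:ℤ) = |(k:ℤ) - (m:ℤ)| + 2 * (p.2:ℤ)
          then Real.pi / 2 else 0 := by
    intro p _
    rw [cheb_orth]
    have : (a + 2 * p.1 = b + 2 * p.2)
        ↔ (|(i:ℤ) - (j:ℤ)| + 2 * (p.1:ℤ) = |(k:ℤ) - (m:ℤ)| + 2 * (p.2:ℤ)) := by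
      rw [← abs_cast_max_min i j, ← abs_cast_max_min k m, ← ha, ← hb]
      constructor
      · intro h; exact_mod_cast congrArg (Nat.cast : ℕ → ℤ) h
      · intro h; exact_mod_cast h
    simp only [this]
  rw [Finset.sum_congr rfl orth, Finset.mul_sum]
  have hpi : Real.pi ≠ 0 := Real.pi_ne_zero
  have term : ∀ p ∈ Finset.range (min i j + 1) ×ˢ Finset.range (min k m + 1),
      (2 / Real.pi) * (if |(i:ℤ) - (j:ℤ)| + 2 * (p.1:ℤ) = |(k:ℤ) - (m:ℤ)| + 2 * (p.2:ℤ)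
        then Real.pi / 2 else 0)
      = if |(i:ℤ) - (j:ℤ)| + 2 * (p.1:ℤ) = |(k:ℤ) - (m:ℤ)| + 2 * (p.2:ℤ)
          then (1:ℝ) else 0 := by
    intro p _
    split
    · field_simp
    · ring
  rw [Finset.sum_congr rfl term, Finset.sum_boole]
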